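/- Let π : E → X be a left fibration of simplicial spaces and x a point of X. Then the evaluation map ev_{id_x} : Map_X(x\X, E) → (E_x)₀ induced by the inclusion {id_x} ↪ x\X is a trivial fibration of simplicial sets. In particular, any two maps f, g : x\X → E over X with f(id_x) ∼ g(id_x) in E_x are homotopic over X. -/

import Mathlib

set_option maxHeartbeats 1000000
set_option synthInstance.maxHeartbeats 400000

set_option linter.unnecessarySimpa false

open CategoryTheory CategoryTheory.Limits MonoidalCategory Simplicial SSet
open CategoryTheory.CartesianClosed

namespace KQ

/-- Simplicial spaces (bisimplicial sets): presheaves on `Δ × Δ`.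
The first coordinate is the "categorical" (simplicial) direction, the second
the "space" direction. -/
abbrev sSp := (SimplexCategory × SimplexCategory)ᵒᵖ ⥤ Type

noncomputable example : MonoidalClosed sSp := inferInstance

/-- The `n`-th space `X_n` of a simplicial space. -/
@[simps]
def lvl (X : sSp) (n : SimplexCategory) : SSet where
  obj m := X.obj (Opposite.op (n, m.unop))
  map {m m'} f := X.map (Quiver.Hom.op ((𝟙 n, f.unop) : (n, m'.unop) ⟶ (n, m.unop)))
  map_id m := by
    show X.map (Quiver.Hom.op ((𝟙 n, (𝟙 m).unop) : (n, m.unop) ⟶ (n, m.unop))) = 𝟙 _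
    have : ((𝟙 n, (𝟙 m).unop) : (n, m.unop) ⟶ (n, m.unop)) = 𝟙 (n, m.unop) := rfl
    rw [this]; exact X.map_id _
  map_comp {m m' m''} f g := by
    show X.map _ = X.map _ ≫ X.map _
    rw [← X.map_comp, ← op_comp]
    congr 1

/-- Functoriality of the spaces `X_n` in the simplicial direction. -/
@[simps]
def lmap (X : sSp) {n n' : SimplexCategory} (a : n ⟶ n') : lvl X n' ⟶ lvl X n where
  app m := X.map (Quiver.Hom.op ((a, 𝟙 m.unop) : (n, m.unop) ⟶ (n', m.unop)))
  naturality {m m'} f := by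
    show X.map _ ≫ X.map _ = X.map _ ≫ X.map _
    rw [← X.map_comp, ← X.map_comp, ← op_comp, ← op_comp]
    congr 2

/-- The map of spaces `X_n ⟶ Y_n` induced by a map of simplicial spaces. -/
@[simps]
def lvlMap {X Y : sSp} (f : X ⟶ Y) (n : SimplexCategory) : lvl X n ⟶ lvl Y n where
  app _ := f.app _
  naturality _ _ _ := f.naturality _


/-- A map of simplicial sets is a Kan fibration: RLP w.r.t. horn inclusions. -/
def KanFib {X Y : SSet} (f : X ⟶ Y) : Prop :=
  ∀ (n : ℕ) (i : Fin (n + 2)), HasLiftingProperty (Λ[n + 1, i].ι) f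

/-- Trivial fibration of simplicial sets: RLP w.r.t. boundary inclusions. -/
def TrivFib {X Y : SSet} (f : X ⟶ Y) : Prop :=
  ∀ (n : ℕ), HasLiftingProperty (∂Δ[n].ι) f

/-- Anodyne maps (trivial cofibrations of the Kan–Quillen model structure). -/
def Anodyne {A B : SSet} (i : A ⟶ B) : Prop :=
  ∀ ⦃X Y : SSet⦄ (p : X ⟶ Y), KanFib p → HasLiftingProperty i p

/-- Weak homotopy equivalences of simplicial sets: maps factoring as an anodyne
map followed by a trivial fibration. -/
def WeakEquiv {X Y : SSet} (f : X ⟶ Y) : Prop :=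
  ∃ (Z : SSet) (i : X ⟶ Z) (p : Z ⟶ Y), Anodyne i ∧ TrivFib p ∧ i ≫ p = f

/-- Weak equivalences of simplicial spaces (Reedy = levelwise). -/
def sWE {X Y : sSp} (f : X ⟶ Y) : Prop :=
  ∀ n : SimplexCategory, WeakEquiv (lvlMap f n)

/-- Cofibrations of simplicial spaces: levelwise monomorphisms. -/
def sCof {X Y : sSp} (f : X ⟶ Y) : Prop :=
  ∀ n : SimplexCategory, Mono (lvlMap f n)

/-- Reedy fibrations of simplicial spaces, characterized by the right lifting
property against all trivial cofibrations. -/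
def sFib {X Y : sSp} (f : X ⟶ Y) : Prop :=
  ∀ ⦃A B : sSp⦄ (i : A ⟶ B), sCof i → sWE i → HasLiftingProperty i f

/-- Reedy trivial fibrations: RLP against all cofibrations. -/
def sTrivFib {X Y : sSp} (f : X ⟶ Y) : Prop :=
  ∀ ⦃A B : sSp⦄ (i : A ⟶ B), sCof i → HasLiftingProperty i f

/-- The discrete simplicial space `F[n]` (the "categorical" `n`-simplex). -/
@[simps]
def F (n : ℕ) : sSp where
  obj p := p.unop.1 ⟶ ⦋n⦌
  map f := TypeCat.ofHom fun g => f.unop.1 ≫ g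

/-- The "space-direction" simplex `Δ[m]` viewed as a simplicial space
(constant in the first variable). -/
@[simps]
def D (m : ℕ) : sSp where
  obj p := p.unop.2 ⟶ ⦋m⦌
  map f := TypeCat.ofHom fun g => f.unop.2 ≫ g

instance homToZeroSubsingleton (a : SimplexCategory) :
    Subsingleton (a ⟶ (⦋0⦌ : SimplexCategory)) :=
  ⟨fun f g => by
    apply SimplexCategory.Hom.ext'
    apply OrderHom.ext
    funext x
    apply Fin.ext
    have h1 : ((f.toOrderHom x : Fin (⦋0⦌.len + 1)) : ℕ) < 0 + 1 := by
      simpa using (f.toOrderHom x).isLt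
    have h2 : ((g.toOrderHom x : Fin (⦋0⦌.len + 1)) : ℕ) < 0 + 1 := by
      simpa using (g.toOrderHom x).isLt
    omega⟩

instance (p : (SimplexCategory × SimplexCategory)ᵒᵖ) : Subsingleton ((F 0).obj p) :=
  inferInstanceAs (Subsingleton (p.unop.1 ⟶ ⦋0⦌))

instance (p : (SimplexCategory × SimplexCategory)ᵒᵖ) : Subsingleton ((D 0).obj p) :=
  inferInstanceAs (Subsingleton (p.unop.2 ⟶ ⦋0⦌))

/-- `F[0]` is a terminal simplicial space. -/
noncomputable def FZeroIsTerminal : IsTerminal (F 0) :=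
  IsTerminal.ofUniqueHom
    (fun X => { app := fun p => TypeCat.ofHom fun _ => SimplexCategory.const p.unop.1 ⦋0⦌ 0
                naturality := fun _ _ _ => by ext; apply Subsingleton.elim })
    (fun X m => by
      ext p x
      apply Subsingleton.elim)

/-- `D[0]` is a terminal simplicial space. -/
noncomputable def DZeroIsTerminal : IsTerminal (D 0) :=
  IsTerminal.ofUniqueHom
    (fun X => { app := fun p => TypeCat.ofHom fun _ => SimplexCategory.const p.unop.2 ⦋0⦌ 0
                naturality := fun _ _ _ => by ext; apply Subsingleton.elim })
    (fun X m => by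
      ext p x
      apply Subsingleton.elim)

/-- Endpoint maps `D[0] ⟶ D[1]` (`i = 0, 1`). -/
def dVtx (i : Fin 2) : D 0 ⟶ D 1 where
  app p := TypeCat.ofHom fun g => g ≫ SimplexCategory.δ i.rev
  naturality _ _ _ := by ext; exact Category.assoc _ _ _

/-- Endpoint inclusions `X ⟶ X ⊗ D[1]` of the cylinder on a simplicial space. -/
noncomputable def cylIncl (i : Fin 2) (X : sSp) : X ⟶ X ⊗ D 1 :=
  CartesianMonoidalCategory.lift (𝟙 X) (DZeroIsTerminal.from X ≫ dVtx i)

/-- Maps `K ⟶ X` over `Z`. -/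
def HomOver {K X Z : sSp} (pK : K ⟶ Z) (pX : X ⟶ Z) : Type :=
  { u : K ⟶ X // u ≫ pX = pK }

/-- Two maps over `Z` are (elementarily) homotopic over `Z` if they are joined
by a fiberwise homotopy with cylinder `K ⊗ D[1]`; i.e., they are joined by an
edge in the mapping space `Map_Z(K, X)`. -/
def HtpyOver {K X Z : sSp} (pK : K ⟶ Z) (pX : X ⟶ Z)
    (u v : HomOver pK pX) : Prop :=
  ∃ h : K ⊗ D 1 ⟶ X,
    h ≫ pX = CartesianMonoidalCategory.fst K (D 1) ≫ pK ∧
    cylIncl 0 K ≫ h = u.1 ∧ cylIncl 1 K ≫ h = v.1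

/-- `π₀` of the mapping space `Map_Z(K, X)`: maps over `Z` up to homotopy
over `Z` (`Quot` takes the equivalence closure of the edge relation, which is
exactly the set of connected components). -/
def pi0MapOver {K X Z : sSp} (pK : K ⟶ Z) (pX : X ⟶ Z) : Type :=
  Quot (HtpyOver pK pX)

/-- `f : X ⟶ Y` over `Z` is a homotopy equivalence over `Z`. -/
noncomputable def HtpyEquivOver {X Y Z : sSp} (pX : X ⟶ Z) (pY : Y ⟶ Z)
    (f : X ⟶ Y) (hf : f ≫ pY = pX) : Prop :=
  ∃ (g : Y ⟶ X) (hg : g ≫ pX = pY),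
    Quot.mk (HtpyOver pX pX) ⟨f ≫ g, by rw [Category.assoc, hg, hf]⟩ =
      Quot.mk (HtpyOver pX pX) ⟨𝟙 X, by simp⟩ ∧
    Quot.mk (HtpyOver pY pY) ⟨g ≫ f, by rw [Category.assoc, hf, hg]⟩ =
      Quot.mk (HtpyOver pY pY) ⟨𝟙 Y, by simp⟩



lemma lmap_lmap (X : sSp) {n n' n'' : SimplexCategory} (a : n' ⟶ n'') (b : n ⟶ n') :
    lmap X a ≫ lmap X b = lmap X (b ≫ a) := by
  apply NatTrans.ext
  funext p
  show X.map _ ≫ X.map _ = X.map _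
  rw [← X.map_comp, ← op_comp, prod_comp, Category.comp_id]

/-- The source (initial vertex) map `X₁ ⟶ X₀`. -/
noncomputable def srcMap (X : sSp) : lvl X ⦋1⦌ ⟶ lvl X ⦋0⦌ :=
  lmap X (SimplexCategory.const ⦋0⦌ ⦋1⦌ 0)

/-- The target (final vertex) map `X₁ ⟶ X₀`. -/
noncomputable def tgtMap (X : sSp) : lvl X ⦋1⦌ ⟶ lvl X ⦋0⦌ :=
  lmap X (SimplexCategory.const ⦋0⦌ ⦋1⦌ 1)

/-- The iterated fiber product `X₁ ×_{X₀} ⋯ ×_{X₀} X₁` (with `k + 1` factors),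
together with its "final vertex" map to `X₀`. -/
noncomputable def chain (X : sSp) : (k : ℕ) → Σ' (S : SSet), S ⟶ lvl X ⦋0⦌ := fun k => match k with
  | 0 => ⟨lvl X ⦋1⦌, tgtMap X⟩
  | k + 1 => ⟨pullback (chain X k).2 (srcMap X),
      pullback.snd (chain X k).2 (srcMap X) ≫ tgtMap X⟩

/-- The Segal map `φ_{k+1} : X_{k+1} ⟶ X₁ ×_{X₀} ⋯ ×_{X₀} X₁`, together with
its compatibility with the final vertex maps. -/
noncomputable def segalMapAux (X : sSp) :
    (k : ℕ) → { φ : lvl X ⦋k + 1⦌ ⟶ (chain X k).1 //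
      φ ≫ (chain X k).2 =
        lmap X (SimplexCategory.const ⦋0⦌ ⦋k + 1⦌ (Fin.last (k + 1))) } := fun k => match k with
  | 0 => ⟨𝟙 _, by
      show 𝟙 _ ≫ tgtMap X = _
      rw [Category.id_comp]
      rfl⟩
  | k + 1 => by
    refine ⟨pullback.lift
      (lmap X (SimplexCategory.δ (Fin.last (k + 2))) ≫ (segalMapAux X k).1)
      (lmap X (SimplexCategory.mkOfSucc (Fin.last (k + 1))))
      ?_, ?_⟩
    · rw [Category.assoc, (segalMapAux X k).2, lmap_lmap]
      unfold srcMap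
      rw [lmap_lmap]
      congr 1
      apply SimplexCategory.Hom.ext_zero_left
      simp [SimplexCategory.comp_toOrderHom, SimplexCategory.δ, Fin.succAbove_last,
        SimplexCategory.mkOfSucc_homToOrderHom_zero]
    · show pullback.lift _ _ _ ≫ (pullback.snd (chain X k).2 (srcMap X) ≫ tgtMap X) = _
      rw [pullback.lift_snd_assoc]
      unfold tgtMap
      rw [lmap_lmap]
      congr 1

/-- The Segal map `X_n ⟶ X₁ ×_{X₀} ⋯ ×_{X₀} X₁` (`n = k + 1 ≥ 1`). -/
noncomputable def segalMap (X : sSp) (k : ℕ) : lvl X ⦋k + 1⦌ ⟶ (chain X k).1 :=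
  (segalMapAux X k).1

/-- A Segal space: a Reedy fibrant simplicial space whose Segal maps
`X_n ⟶ X₁ ×_{X₀} ⋯ ×_{X₀} X₁` are weak equivalences. -/
noncomputable def IsSegal (X : sSp) : Prop :=
  sFib (FZeroIsTerminal.from X) ∧ ∀ k : ℕ, WeakEquiv (segalMap X k)


/-- The map `F[n] ⟶ F[m]` induced by `a : [n] ⟶ [m]`. -/
def FHom {n m : ℕ} (a : (⦋n⦌ : SimplexCategory) ⟶ ⦋m⦌) : F n ⟶ F m where
  app p := TypeCat.ofHom fun g => g ≫ a
  naturality _ _ _ := by ext; exact Category.assoc _ _ _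

/-- The inclusion `δ⁰ : F[0] ⟶ F[1]` of the initial vertex. -/
def e01 : F 0 ⟶ F 1 := FHom (SimplexCategory.δ 1)

/-- The inclusion `δ⁰ : F[0] ⟶ F[n]` of the initial vertex. -/
def e0F (n : ℕ) : F 0 ⟶ F n := FHom (SimplexCategory.const ⦋0⦌ ⦋n⦌ 0)

/-- For `i : A ⟶ B` and `p : X ⟶ Y`, the induced map
`X^B ⟶ X^A ×_{Y^A} Y^B`. -/
noncomputable def expComparison' {A B X Y : sSp} (i : A ⟶ B) (p : X ⟶ Y) :
    (B ⟹ X) ⟶ pullback ((ihom A).map p) ((MonoidalClosed.pre i).app Y) :=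
  pullback.lift ((MonoidalClosed.pre i).app X) ((ihom B).map p) ((MonoidalClosed.pre i).naturality p).symm

/-- A left fibration is a Reedy fibration `f : X ⟶ Y` such that the induced
map `X^{F[1]} ⟶ X^{F[0]} ×_{Y^{F[0]}} Y^{F[1]}` (note `F[0]` is terminal, so
`X^{F[0]} ≅ X`) is a trivial fibration. -/
noncomputable def LeftFib {X Y : sSp} (f : X ⟶ Y) : Prop :=
  sFib f ∧ sTrivFib (expComparison' e01 f)




/-- The inclusion of the final vertex `F[0] ⟶ F[1]`. -/
def e1F : F 0 ⟶ F 1 := FHom (SimplexCategory.δ 0)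

/-- The canonical map `X^{F[0]} ⟶ X` (evaluation; an isomorphism since `F[0]`
is terminal). -/
noncomputable def unpt (X : sSp) : ((F 0) ⟹ X) ⟶ X :=
  CartesianMonoidalCategory.lift (FZeroIsTerminal.from _) (𝟙 _) ≫ ((ihom.ev (F 0)).app X)

/-- Evaluation of `X^{F[1]}` at the initial vertex, `X^{F[1]} ⟶ X`. -/
noncomputable def ev0X (X : sSp) : ((F 1) ⟹ X) ⟶ X :=
  (MonoidalClosed.pre e01).app X ≫ unpt X

/-- Evaluation of `X^{F[1]}` at the final vertex, `X^{F[1]} ⟶ X`. -/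
noncomputable def ev1X (X : sSp) : ((F 1) ⟹ X) ⟶ X :=
  (MonoidalClosed.pre e1F).app X ≫ unpt X

/-- The undercategory `x\X := {x} ×_X X^{F[1]}` (fiber over the initial
vertex evaluation). -/
noncomputable def underCat {X : sSp} (x : F 0 ⟶ X) : sSp :=
  pullback (ev0X X) x

/-- The projection `x\X ⟶ X`, evaluation at the final vertex. -/
noncomputable def underProj {X : sSp} (x : F 0 ⟶ X) : underCat x ⟶ X :=
  pullback.fst (ev0X X) x ≫ ev1X X

/-- The identity edge at `x`, as a point of `x\X` (the constant edge at `x`). -/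
noncomputable def idEdge {X : sSp} (x : F 0 ⟶ X) : F 0 ⟶ underCat x :=
  pullback.lift (MonoidalClosed.curry (CartesianMonoidalCategory.snd (F 1) (F 0) ≫ x))
    (𝟙 (F 0))
    (by
      unfold ev0X unpt
      rw [Category.id_comp]
      have key : ∀ m : F 0 ⟶ ((F 0) ⟹ X),
          m ≫ (CartesianMonoidalCategory.lift (FZeroIsTerminal.from ((F 0) ⟹ X)) (𝟙 _) ≫
            (ihom.ev (F 0)).app X) =
          CartesianMonoidalCategory.lift (FZeroIsTerminal.from (F 0)) (𝟙 (F 0)) ≫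
            MonoidalClosed.uncurry m := by
        intro m
        rw [MonoidalClosed.uncurry_eq]
        rw [← Category.assoc, ← Category.assoc]
        congr 1
      rw [← Category.assoc, key]
      rw [MonoidalClosed.uncurry_natural_left, MonoidalClosed.uncurry_pre]
      rw [← Category.assoc ((F 0) ◁ _), whisker_exchange]
      rw [Category.assoc, ← MonoidalClosed.uncurry_eq, MonoidalClosed.uncurry_curry,
        CartesianMonoidalCategory.whiskerRight_snd_assoc,
        CartesianMonoidalCategory.lift_snd_assoc, Category.id_comp])


/-- The simplex `Δ[c]` in the space direction, as a simplicial space. -/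
@[simps]
def Dc (c : SimplexCategory) : sSp where
  obj p := p.unop.2 ⟶ c
  map f := TypeCat.ofHom fun g => f.unop.2 ≫ g

/-- Functoriality of `Dc`. -/
def DcHom {c c' : SimplexCategory} (a : c ⟶ c') : Dc c ⟶ Dc c' where
  app p := TypeCat.ofHom fun g => g ≫ a
  naturality _ _ _ := by ext; exact Category.assoc _ _ _

lemma DcHom_id (c : SimplexCategory) : DcHom (𝟙 c) = 𝟙 (Dc c) := by
  ext p g
  exact Category.comp_id g

lemma DcHom_comp {c c' c'' : SimplexCategory} (a : c ⟶ c') (b : c' ⟶ c'') :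
    DcHom (a ≫ b) = DcHom a ≫ DcHom b := by
  ext p g
  exact (Category.assoc g a b).symm

/-- The mapping space `Map_Z(A, E)` of maps over `Z`: its `m`-simplices are
the maps `A ⊗ Δ[m] ⟶ E` over `Z`. -/
noncomputable def MapOver (Z A E : sSp) (pA : A ⟶ Z) (pE : E ⟶ Z) : SSet where
  obj mo := { u : (MonoidalCategory.tensorObj A (Dc mo.unop)) ⟶ E //
    u ≫ pE = CartesianMonoidalCategory.fst A (Dc mo.unop) ≫ pA }
  map {mo mo'} f := TypeCat.ofHom fun u => ⟨(A ◁ DcHom f.unop) ≫ u.1, by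
    rw [Category.assoc, u.2]
    simp⟩
  map_id mo := by
    refine ConcreteCategory.hom_ext _ _ fun u => ?_
    apply Subtype.ext
    show (A ◁ DcHom (𝟙 mo).unop) ≫ u.1 = u.1
    rw [show ((𝟙 mo).unop) = 𝟙 mo.unop from rfl, DcHom_id]
    simp
  map_comp {mo mo' mo''} f g := by
    refine ConcreteCategory.hom_ext _ _ fun u => ?_
    apply Subtype.ext
    show (A ◁ DcHom (f ≫ g).unop) ≫ u.1 = (A ◁ DcHom g.unop) ≫ (A ◁ DcHom f.unop) ≫ u.1
    rw [show ((f ≫ g).unop) = g.unop ≫ f.unop from rfl, DcHom_comp,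
      MonoidalCategory.whiskerLeft_comp]
    simp

/-- Precomposition `Map_Z(A, E) ⟶ Map_Z(A', E)` along `g : A' ⟶ A` over `Z`. -/
noncomputable def MapOverPrecomp {Z A A' E : sSp} (pA : A ⟶ Z) (pE : E ⟶ Z)
    (g : A' ⟶ A) :
    MapOver Z A E pA pE ⟶ MapOver Z A' E (g ≫ pA) pE where
  app mo := TypeCat.ofHom fun u => ⟨(g ▷ Dc mo.unop) ≫ u.1, by
    rw [Category.assoc, u.2]
    simp⟩
  naturality {mo mo'} f := by
    refine ConcreteCategory.hom_ext _ _ fun u => ?_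
    apply Subtype.ext
    show (g ▷ Dc mo'.unop) ≫ (A ◁ DcHom f.unop) ≫ u.1 =
      (A' ◁ DcHom f.unop) ≫ (g ▷ Dc mo.unop) ≫ u.1
    rw [← Category.assoc, ← Category.assoc, whisker_exchange]


/-!
STATEMENT 17: Let `π : E ⟶ X` be a left fibration of simplicial spaces and
`x` a point of `X`. Then the evaluation map
`ev_{id_x} : Map_X(x\X, E) ⟶ Map_X({id_x}, E) = (E_x)₀`, induced by the
inclusion `{id_x} ↪ x\X`, is a trivial fibration of simplicial sets. In
particular, any two maps `f, g : x\X ⟶ E` over `X` with `f(id_x) ∼ g(id_x)`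
in `E_x` are homotopic over `X`.
-/

lemma tcongr {A B : Type} {f g : A ⟶ B} (h : f = g) (a : A) : f a = g a := by rw [h]

section Basic

open CartesianMonoidalCategory MonoidalClosed

lemma homF0_unique {W : sSp} (f g : W ⟶ F 0) : f = g :=
  FZeroIsTerminal.hom_ext f g

lemma unpt_comp {X W : sSp} (n : W ⟶ ((F 0) ⟹ X)) :
    n ≫ unpt X =
      CartesianMonoidalCategory.lift (FZeroIsTerminal.from W) (𝟙 W) ≫ MonoidalClosed.uncurry n := by
  rw [MonoidalClosed.uncurry_eq]
  show n ≫ (CartesianMonoidalCategory.lift _ (𝟙 _) ≫ _) = _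
  rw [← Category.assoc, ← Category.assoc]
  congr 1

lemma uncurry_comp_pre_app {A B X W : sSp} (i : A ⟶ B) (m : W ⟶ (B ⟹ X)) :
    MonoidalClosed.uncurry (m ≫ (MonoidalClosed.pre i).app X) = (i ▷ W) ≫ MonoidalClosed.uncurry m := by
  rw [MonoidalClosed.uncurry_natural_left, MonoidalClosed.uncurry_pre, ← Category.assoc, whisker_exchange,
    Category.assoc, ← MonoidalClosed.uncurry_eq]

lemma uncurry_F0 {X W : sSp} (n : W ⟶ ((F 0) ⟹ X)) :
    MonoidalClosed.uncurry n = CartesianMonoidalCategory.snd (F 0) W ≫ n ≫ unpt X := by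
  rw [unpt_comp, ← Category.assoc]
  have h : CartesianMonoidalCategory.snd (F 0) W ≫
      CartesianMonoidalCategory.lift (FZeroIsTerminal.from W) (𝟙 W) = 𝟙 _ := by
    apply CartesianMonoidalCategory.hom_ext
    · exact homF0_unique _ _
    · simp
  rw [h, Category.id_comp]

/-- Vertex insertion `W ⟶ F[1] ⊗ W` at the vertex `v : F[0] ⟶ F[1]`. -/
noncomputable def vin (v : F 0 ⟶ F 1) (W : sSp) : W ⟶ (F 1) ⊗ W :=
  CartesianMonoidalCategory.lift (FZeroIsTerminal.from W ≫ v) (𝟙 W)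

lemma comp_pre_unpt {X W : sSp} (v : F 0 ⟶ F 1) (m : W ⟶ ((F 1) ⟹ X)) :
    m ≫ ((MonoidalClosed.pre v).app X ≫ unpt X) = vin v W ≫ MonoidalClosed.uncurry m := by
  rw [← Category.assoc, unpt_comp, uncurry_comp_pre_app, ← Category.assoc]
  congr 1

lemma comp_ev0X {X : sSp} {W : sSp} (m : W ⟶ ((F 1) ⟹ X)) :
    m ≫ ev0X X = vin e01 W ≫ MonoidalClosed.uncurry m :=
  comp_pre_unpt e01 m

lemma comp_ev1X {X : sSp} {W : sSp} (m : W ⟶ ((F 1) ⟹ X)) :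
    m ≫ ev1X X = vin e1F W ≫ MonoidalClosed.uncurry m :=
  comp_pre_unpt e1F m

lemma vin_natural {S T : sSp} (v : F 0 ⟶ F 1) (f : S ⟶ T) :
    f ≫ vin v T = vin v S ≫ ((F 1) ◁ f) := by
  apply CartesianMonoidalCategory.hom_ext
  · simp only [vin, Category.assoc, CartesianMonoidalCategory.lift_fst,
      CartesianMonoidalCategory.whiskerLeft_fst]
    rw [← Category.assoc]
    congr 1
  · simp [vin]

lemma sset_mono_of_injective {A B : SSet} (f : A ⟶ B)
    (h : ∀ q, Function.Injective (f.app q)) : Mono f := by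
  haveI : ∀ q, Mono (f.app q) := fun q => (CategoryTheory.mono_iff_injective _).2 (h q)
  exact NatTrans.mono_of_mono_app f

lemma sCof_of_injective {A B : sSp} (f : A ⟶ B)
    (h : ∀ p, Function.Injective (f.app p)) : sCof f :=
  fun _ => sset_mono_of_injective _ (fun _ => h _)

/-- The key consequence of `π` being a left fibration: uncurried lifting of
cofibrations against the initial-vertex evaluation. -/
lemma lift_along_e01 {E X : sSp} (π : E ⟶ X)
    (hπ : sTrivFib (expComparison' e01 π))
    {S T : sSp} (c : S ⟶ T) (hc : sCof c)
    (h : (F 1) ⊗ S ⟶ E) (e0 : (F 0) ⊗ T ⟶ E) (G : (F 1) ⊗ T ⟶ X)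
    (H1 : h ≫ π = ((F 1) ◁ c) ≫ G)
    (H2 : e0 ≫ π = (e01 ▷ T) ≫ G)
    (H3 : ((F 0) ◁ c) ≫ e0 = (e01 ▷ S) ≫ h) :
    ∃ L : (F 1) ⊗ T ⟶ E,
      ((F 1) ◁ c) ≫ L = h ∧ (e01 ▷ T) ≫ L = e0 ∧ L ≫ π = G := by
  have hw : MonoidalClosed.curry e0 ≫ (ihom (F 0)).map π =
      MonoidalClosed.curry G ≫ (MonoidalClosed.pre e01).app X := by
    rw [← MonoidalClosed.curry_natural_right, H2]
    apply MonoidalClosed.uncurry_injective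
    rw [MonoidalClosed.uncurry_curry, uncurry_comp_pre_app, MonoidalClosed.uncurry_curry]
  have hsq : CommSq (MonoidalClosed.curry h) c (expComparison' e01 π)
      (pullback.lift (MonoidalClosed.curry e0) (MonoidalClosed.curry G) hw) := by
    constructor
    apply pullback.hom_ext
    · rw [Category.assoc, Category.assoc, expComparison', pullback.lift_fst, pullback.lift_fst]
      apply MonoidalClosed.uncurry_injective
      rw [uncurry_comp_pre_app, MonoidalClosed.uncurry_curry,
        MonoidalClosed.uncurry_natural_left, MonoidalClosed.uncurry_curry, H3]
    · rw [Category.assoc, Category.assoc, expComparison', pullback.lift_snd, pullback.lift_snd,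
        ← MonoidalClosed.curry_natural_right, H1, MonoidalClosed.curry_natural_left]
  haveI := hπ c hc
  refine ⟨MonoidalClosed.uncurry hsq.lift, ?_, ?_, ?_⟩
  · rw [← MonoidalClosed.uncurry_natural_left, hsq.fac_left, MonoidalClosed.uncurry_curry]
  · rw [← uncurry_comp_pre_app]
    have : hsq.lift ≫ (MonoidalClosed.pre e01).app E = MonoidalClosed.curry e0 := by
      have h1 : expComparison' e01 π ≫ pullback.fst _ _ = (MonoidalClosed.pre e01).app E := by
        rw [expComparison', pullback.lift_fst]
      rw [← h1, ← Category.assoc, hsq.fac_right, pullback.lift_fst]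
    rw [this, MonoidalClosed.uncurry_curry]
  · have h2 : hsq.lift ≫ (ihom (F 1)).map π = MonoidalClosed.curry G := by
      have h1 : expComparison' e01 π ≫ pullback.snd _ _ = (ihom (F 1)).map π := by
        rw [expComparison', pullback.lift_snd]
      rw [← h1, ← Category.assoc, hsq.fac_right, pullback.lift_snd]
    rw [← MonoidalClosed.uncurry_natural_right, h2, MonoidalClosed.uncurry_curry]

end Basic
section HUdev

open CartesianMonoidalCategory MonoidalClosed

/-- Pointwise minimum of two maps to `[1]`. -/
def minH {k : SimplexCategory} (f g : k ⟶ ⦋1⦌) : k ⟶ (⦋1⦌ : SimplexCategory) :=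
  SimplexCategory.Hom.mk
    ⟨fun i => min (f.toOrderHom i) (g.toOrderHom i), fun i j hij =>
      le_min ((min_le_left _ _).trans (f.toOrderHom.monotone hij))
        ((min_le_right _ _).trans (g.toOrderHom.monotone hij))⟩

/-- The "minimum" map `F[1] ⊗ F[1] ⟶ F[1]`. -/
def nu : (F 1) ⊗ (F 1) ⟶ F 1 where
  app p := TypeCat.ofHom fun y => minH y.1 y.2
  naturality {p q} φ := ConcreteCategory.hom_ext _ _ fun y => by
    apply SimplexCategory.Hom.ext'
    apply OrderHom.ext
    funext i
    rfl

lemma delta1_val (i : Fin 1) : (SimplexCategory.δ (1 : Fin 2)).toOrderHom i = 0 := by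
  have h : i = 0 := Subsingleton.elim _ _
  subst h
  decide

lemma delta0_val (i : Fin 1) : (SimplexCategory.δ (0 : Fin 2)).toOrderHom i = 1 := by
  have h : i = 0 := Subsingleton.elim _ _
  subst h
  decide

lemma fin2_le_one (t : Fin 2) : t ≤ (1 : Fin 2) := by
  have := t.isLt
  exact Fin.le_def.mpr (by omega)

lemma minH_l0 {b : SimplexCategory} (c : b ⟶ (⦋0⦌ : SimplexCategory)) (t : b ⟶ ⦋1⦌) :
    minH (c ≫ SimplexCategory.δ 1) t = c ≫ SimplexCategory.δ 1 := by
  apply SimplexCategory.Hom.ext'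
  apply OrderHom.ext
  funext i
  show min ((SimplexCategory.δ (1 : Fin 2)).toOrderHom (c.toOrderHom i)) (t.toOrderHom i) = _
  rw [delta1_val]
  exact (min_eq_left (Fin.zero_le _)).trans (delta1_val _).symm

lemma minH_r0 {b : SimplexCategory} (c : b ⟶ (⦋0⦌ : SimplexCategory)) (t : b ⟶ ⦋1⦌) :
    minH t (c ≫ SimplexCategory.δ 1) = c ≫ SimplexCategory.δ 1 := by
  apply SimplexCategory.Hom.ext'
  apply OrderHom.ext
  funext i
  show min (t.toOrderHom i) ((SimplexCategory.δ (1 : Fin 2)).toOrderHom (c.toOrderHom i)) = _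
  rw [delta1_val]
  exact (min_eq_right (Fin.zero_le _)).trans (delta1_val _).symm

lemma minH_r1 {b : SimplexCategory} (c : b ⟶ (⦋0⦌ : SimplexCategory)) (t : b ⟶ ⦋1⦌) :
    minH t (c ≫ SimplexCategory.δ 0) = t := by
  apply SimplexCategory.Hom.ext'
  apply OrderHom.ext
  funext i
  show min (t.toOrderHom i) ((SimplexCategory.δ (0 : Fin 2)).toOrderHom (c.toOrderHom i)) = _
  rw [delta0_val]
  exact min_eq_left (fin2_le_one _)

lemma nu_l0 : (e01 ▷ (F 1)) ≫ nu = CartesianMonoidalCategory.fst (F 0) (F 1) ≫ e01 := by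
  apply NatTrans.ext
  funext p
  ext z
  exact minH_l0 z.1 z.2

lemma nu_r0 : ((F 1) ◁ e01) ≫ nu = CartesianMonoidalCategory.snd (F 1) (F 0) ≫ e01 := by
  apply NatTrans.ext
  funext p
  ext z
  exact minH_r0 z.2 z.1

lemma nu_r1 : ((F 1) ◁ e1F) ≫ nu = CartesianMonoidalCategory.fst (F 1) (F 0) := by
  apply NatTrans.ext
  funext p
  ext z
  exact minH_r1 z.2 z.1

lemma chi_zero {X : sSp} (x : F 0 ⟶ X) :
    (e01 ▷ underCat x) ≫ MonoidalClosed.uncurry (pullback.fst (ev0X X) x) =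
      CartesianMonoidalCategory.fst (F 0) (underCat x) ≫ x := by
  erw [← uncurry_comp_pre_app, uncurry_F0, Category.assoc]
  rw [show (MonoidalClosed.pre e01).app X ≫ unpt X = ev0X X from rfl]
  erw [pullback.condition, ← Category.assoc]
  congr 1
  exact homF0_unique _ _

/-- The uncurried homotopy on `x\X` from the constant edge to the identity. -/
noncomputable def bigU {X : sSp} (x : F 0 ⟶ X) :
    (F 1) ⊗ ((F 1) ⊗ underCat x) ⟶ X :=
  (α_ (F 1) (F 1) (underCat x)).inv ≫ (nu ▷ underCat x) ≫
    MonoidalClosed.uncurry (pullback.fst (ev0X X) x)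

lemma st1 (W : sSp) :
    vin e01 ((F 1) ⊗ W) ≫ ((α_ (F 1) (F 1) W).inv ≫ (nu ▷ W)) =
      CartesianMonoidalCategory.lift (FZeroIsTerminal.from ((F 1) ⊗ W) ≫ e01)
        (CartesianMonoidalCategory.snd (F 1) W) := by
  have h1 : vin e01 ((F 1) ⊗ W) ≫ ((α_ (F 1) (F 1) W).inv ≫ (nu ▷ W)) =
      CartesianMonoidalCategory.lift
        ((CartesianMonoidalCategory.lift (FZeroIsTerminal.from ((F 1) ⊗ W))
          (CartesianMonoidalCategory.fst (F 1) W) ≫ (e01 ▷ (F 1))) ≫ nu)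
        (CartesianMonoidalCategory.snd (F 1) W) := rfl
  rw [h1, Category.assoc, nu_l0]
  apply CartesianMonoidalCategory.hom_ext
  · simp
  · simp

lemma st2 (W : sSp) :
    ((F 1) ◁ (e01 ▷ W)) ≫ ((α_ (F 1) (F 1) W).inv ≫ (nu ▷ W)) =
      CartesianMonoidalCategory.snd (F 1) ((F 0) ⊗ W) ≫ (e01 ▷ W) := by
  have h1 : ((F 1) ◁ (e01 ▷ W)) ≫ ((α_ (F 1) (F 1) W).inv ≫ (nu ▷ W)) =
      CartesianMonoidalCategory.lift
        ((CartesianMonoidalCategory.lift (CartesianMonoidalCategory.fst (F 1) ((F 0) ⊗ W))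
          (CartesianMonoidalCategory.snd (F 1) ((F 0) ⊗ W) ≫ CartesianMonoidalCategory.fst (F 0) W)
            ≫ ((F 1) ◁ e01)) ≫ nu)
        (CartesianMonoidalCategory.snd (F 1) ((F 0) ⊗ W) ≫ CartesianMonoidalCategory.snd (F 0) W) := rfl
  rw [h1, Category.assoc, nu_r0]
  apply CartesianMonoidalCategory.hom_ext
  · simp
  · simp

lemma st3 (W : sSp) :
    ((F 1) ◁ vin e1F W) ≫ ((α_ (F 1) (F 1) W).inv ≫ (nu ▷ W)) = 𝟙 ((F 1) ⊗ W) := by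
  have h1 : ((F 1) ◁ vin e1F W) ≫ ((α_ (F 1) (F 1) W).inv ≫ (nu ▷ W)) =
      CartesianMonoidalCategory.lift
        ((CartesianMonoidalCategory.lift (CartesianMonoidalCategory.fst (F 1) W)
          (CartesianMonoidalCategory.snd (F 1) W ≫ FZeroIsTerminal.from W) ≫ ((F 1) ◁ e1F)) ≫ nu)
        (CartesianMonoidalCategory.snd (F 1) W) := rfl
  rw [h1, Category.assoc, nu_r1]
  apply CartesianMonoidalCategory.hom_ext
  · simp
  · simp

lemma wHU {X : sSp} (x : F 0 ⟶ X) :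
    MonoidalClosed.curry (bigU x) ≫ ev0X X =
      FZeroIsTerminal.from ((F 1) ⊗ underCat x) ≫ x := by
  rw [comp_ev0X, MonoidalClosed.uncurry_curry]
  show vin e01 _ ≫ ((α_ (F 1) (F 1) (underCat x)).inv ≫ (nu ▷ underCat x) ≫
    MonoidalClosed.uncurry (pullback.fst (ev0X X) x)) = _
  rw [show (α_ (F 1) (F 1) (underCat x)).inv ≫ (nu ▷ underCat x) ≫
      MonoidalClosed.uncurry (pullback.fst (ev0X X) x) =
      ((α_ (F 1) (F 1) (underCat x)).inv ≫ (nu ▷ underCat x)) ≫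
      MonoidalClosed.uncurry (pullback.fst (ev0X X) x) from by rw [Category.assoc]]
  rw [← Category.assoc, st1]
  have h1 : CartesianMonoidalCategory.lift
      (FZeroIsTerminal.from ((F 1) ⊗ underCat x) ≫ e01)
      (CartesianMonoidalCategory.snd (F 1) (underCat x)) =
      CartesianMonoidalCategory.snd (F 1) (underCat x) ≫ vin e01 (underCat x) := by
    apply CartesianMonoidalCategory.hom_ext
    · simp only [vin, CartesianMonoidalCategory.lift_fst, Category.assoc,
        CartesianMonoidalCategory.lift_fst]
      rw [← Category.assoc]
      congr 1
    · simp [vin]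
  erw [h1, Category.assoc, ← comp_ev0X, pullback.condition, ← Category.assoc]
  congr 1
  exact homF0_unique _ _

/-- The homotopy `F[1] ⊗ x\X ⟶ x\X` contracting `x\X` onto `id_x`. -/
noncomputable def HU {X : sSp} (x : F 0 ⟶ X) :
    (F 1) ⊗ underCat x ⟶ underCat x :=
  pullback.lift (MonoidalClosed.curry (bigU x)) (FZeroIsTerminal.from _) (wHU x)

lemma HU_fst {X : sSp} (x : F 0 ⟶ X) :
    HU x ≫ pullback.fst (ev0X X) x = MonoidalClosed.curry (bigU x) :=
  pullback.lift_fst _ _ _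

lemma idEdge_fst {X : sSp} (x : F 0 ⟶ X) :
    idEdge x ≫ pullback.fst (ev0X X) x =
      MonoidalClosed.curry (CartesianMonoidalCategory.snd (F 1) (F 0) ≫ x) :=
  pullback.lift_fst _ _ _

lemma HUa {X : sSp} (x : F 0 ⟶ X) :
    (e01 ▷ underCat x) ≫ HU x =
      CartesianMonoidalCategory.fst (F 0) (underCat x) ≫ idEdge x := by
  apply pullback.hom_ext
  · erw [Category.assoc, Category.assoc, HU_fst, idEdge_fst]
    apply MonoidalClosed.uncurry_injective
    rw [MonoidalClosed.uncurry_natural_left, MonoidalClosed.uncurry_curry,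
      MonoidalClosed.uncurry_natural_left, MonoidalClosed.uncurry_curry]
    show ((F 1) ◁ (e01 ▷ underCat x)) ≫ ((α_ (F 1) (F 1) (underCat x)).inv ≫
      (nu ▷ underCat x) ≫ MonoidalClosed.uncurry (pullback.fst (ev0X X) x)) = _
    rw [show (α_ (F 1) (F 1) (underCat x)).inv ≫ (nu ▷ underCat x) ≫
        MonoidalClosed.uncurry (pullback.fst (ev0X X) x) =
        ((α_ (F 1) (F 1) (underCat x)).inv ≫ (nu ▷ underCat x)) ≫
        MonoidalClosed.uncurry (pullback.fst (ev0X X) x) from by rw [Category.assoc]]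
    rw [← Category.assoc, st2, Category.assoc, chi_zero]
    rfl
  · exact homF0_unique _ _

lemma HUb {X : sSp} (x : F 0 ⟶ X) :
    vin e1F (underCat x) ≫ HU x = 𝟙 (underCat x) := by
  apply pullback.hom_ext
  · erw [Category.assoc, HU_fst, Category.id_comp]
    apply MonoidalClosed.uncurry_injective
    rw [MonoidalClosed.uncurry_natural_left, MonoidalClosed.uncurry_curry]
    show ((F 1) ◁ vin e1F (underCat x)) ≫ ((α_ (F 1) (F 1) (underCat x)).inv ≫
      (nu ▷ underCat x) ≫ MonoidalClosed.uncurry (pullback.fst (ev0X X) x)) = _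
    rw [show (α_ (F 1) (F 1) (underCat x)).inv ≫ (nu ▷ underCat x) ≫
        MonoidalClosed.uncurry (pullback.fst (ev0X X) x) =
        ((α_ (F 1) (F 1) (underCat x)).inv ≫ (nu ▷ underCat x)) ≫
        MonoidalClosed.uncurry (pullback.fst (ev0X X) x) from by rw [Category.assoc]]
    rw [← Category.assoc, st3, Category.id_comp]
  · exact homF0_unique _ _

lemma HUd {X : sSp} (x : F 0 ⟶ X) :
    ((F 1) ◁ idEdge x) ≫ HU x =
      CartesianMonoidalCategory.snd (F 1) (F 0) ≫ idEdge x := by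
  apply pullback.hom_ext
  · erw [Category.assoc, Category.assoc, HU_fst, idEdge_fst]
    apply MonoidalClosed.uncurry_injective
    rw [MonoidalClosed.uncurry_natural_left, MonoidalClosed.uncurry_curry,
      MonoidalClosed.uncurry_natural_left, MonoidalClosed.uncurry_curry]
    have s1 : ((F 1) ◁ ((F 1) ◁ idEdge x)) ≫ (α_ (F 1) (F 1) (underCat x)).inv =
        (α_ (F 1) (F 1) (F 0)).inv ≫
          (MonoidalCategory.whiskerLeft (MonoidalCategory.tensorObj (F 1) (F 1))
            (idEdge x)) := rfl
    have s2 : (MonoidalCategory.whiskerLeft (MonoidalCategory.tensorObj (F 1) (F 1))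
        (idEdge x)) ≫ (nu ▷ underCat x) = (nu ▷ (F 0)) ≫ ((F 1) ◁ idEdge x) :=
      whisker_exchange nu (idEdge x)
    have s3 : ((F 1) ◁ idEdge x) ≫ MonoidalClosed.uncurry (pullback.fst (ev0X X) x) =
        CartesianMonoidalCategory.snd (F 1) (F 0) ≫ x := by
      erw [← MonoidalClosed.uncurry_natural_left, idEdge_fst, MonoidalClosed.uncurry_curry]
    have s4 : (α_ (F 1) (F 1) (F 0)).inv ≫ (nu ▷ (F 0)) ≫
        CartesianMonoidalCategory.snd (F 1) (F 0) =
        ((F 1) ◁ CartesianMonoidalCategory.snd (F 1) (F 0)) ≫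
          CartesianMonoidalCategory.snd (F 1) (F 0) := rfl
    show ((F 1) ◁ ((F 1) ◁ idEdge x)) ≫ ((α_ (F 1) (F 1) (underCat x)).inv ≫
      (nu ▷ underCat x) ≫ MonoidalClosed.uncurry (pullback.fst (ev0X X) x)) = _
    simp only [← Category.assoc]
    simp only [Category.assoc]
    slice_lhs 1 2 => rw [s1]
    slice_lhs 2 3 => rw [s2]
    slice_lhs 3 4 => rw [s3]
    slice_lhs 1 3 => rw [s4]
    simp only [Category.assoc]
  · exact homF0_unique _ _

lemma jp {X : sSp} (x : F 0 ⟶ X) : idEdge x ≫ underProj x = x := by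
  show idEdge x ≫ pullback.fst (ev0X X) x ≫ ev1X X = x
  erw [← Category.assoc, idEdge_fst, comp_ev1X, MonoidalClosed.uncurry_curry,
    ← Category.assoc]
  rw [show vin e1F (F 0) ≫ CartesianMonoidalCategory.snd (F 1) (F 0) = 𝟙 (F 0) from by
    simp [vin]]
  rw [Category.id_comp]

end HUdev
section Core

open CartesianMonoidalCategory MonoidalClosed

lemma napp {A B : sSp} {f g : A ⟶ B} (h : f = g) (q) (y : A.obj q) :
    f.app q y = g.app q y := by rw [h]

variable {X : sSp}

/-- Abbreviation for `(x\X) ⊗ Δc[n]`. -/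
noncomputable abbrev TB (x : F 0 ⟶ X) (n : ℕ) : sSp := underCat x ⊗ Dc ⦋n⦌

/-- The subobject of `(x\X) ⊗ Δc[n]` spanned by simplices whose `Δc[n]`-component
is in the boundary, or whose `x\X`-component is the identity edge. -/
noncomputable def bSub (x : F 0 ⟶ X) (n : ℕ) : sSp where
  obj q := { y : (TB x n).obj q //
    ¬ Function.Surjective (SimplexCategory.Hom.toOrderHom y.2) ∨
      ∃ z : (F 0).obj q, (idEdge x).app q z = y.1 }
  map {q q'} φ := TypeCat.ofHom fun y => ⟨(TB x n).map φ y.1, by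
    rcases y.2 with hs | ⟨z, hz⟩
    · exact Or.inl (fun hsurj => hs (Function.Surjective.of_comp hsurj))
    · exact Or.inr ⟨(F 0).map φ z,
        (tcongr ((idEdge x).naturality φ) z).trans
          (congrArg ((underCat x).map φ) hz)⟩⟩
  map_id q := by
    refine ConcreteCategory.hom_ext _ _ fun y => ?_
    apply Subtype.ext
    exact tcongr ((TB x n).map_id q) y.1
  map_comp {q q' q''} φ ψ := by
    refine ConcreteCategory.hom_ext _ _ fun y => ?_
    apply Subtype.ext
    exact tcongr ((TB x n).map_comp φ ψ) y.1

/-- Inclusion of the subobject. -/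
noncomputable def bIncl (x : F 0 ⟶ X) (n : ℕ) : bSub x n ⟶ TB x n where
  app q := TypeCat.ofHom Subtype.val
  naturality _ _ _ := rfl

lemma bCancel {x : F 0 ⟶ X} {n : ℕ} {W : sSp} {f g : W ⟶ bSub x n}
    (h : f ≫ bIncl x n = g ≫ bIncl x n) : f = g := by
  apply NatTrans.ext
  funext q
  ext y
  apply Subtype.ext
  exact tcongr (congrArg (fun nt => NatTrans.app nt q) h) y

lemma bIncl_injective (x : F 0 ⟶ X) (n : ℕ) (q) :
    Function.Injective ((bIncl x n).app q) := fun _ _ h => Subtype.ext h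

/-- The map `F[0] ⊗ ((x\X) ⊗ Δc[n]) ⟶ (x\X) ⊗ Δc[n]` collapsing the `x\X`
coordinate to the identity edge. -/
noncomputable def m0 (x : F 0 ⟶ X) (n : ℕ) :
    (F 0) ⊗ (TB x n) ⟶ TB x n :=
  CartesianMonoidalCategory.lift
    (CartesianMonoidalCategory.fst _ _ ≫ idEdge x)
    (CartesianMonoidalCategory.snd _ _ ≫ CartesianMonoidalCategory.snd (underCat x) (Dc ⦋n⦌))

/-- `m0` corestricted to the subobject. -/
noncomputable def q0 (x : F 0 ⟶ X) (n : ℕ) :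
    (F 0) ⊗ (TB x n) ⟶ bSub x n where
  app q := TypeCat.ofHom fun y => ⟨(m0 x n).app q y, Or.inr ⟨y.1, rfl⟩⟩
  naturality {q q'} φ := by
    refine ConcreteCategory.hom_ext _ _ fun y => ?_
    apply Subtype.ext
    exact tcongr ((m0 x n).naturality φ) y

/-- The contracting homotopy tensored with `Δc[n]`. -/
noncomputable def Htld (x : F 0 ⟶ X) (n : ℕ) :
    (F 1) ⊗ (TB x n) ⟶ TB x n :=
  (α_ (F 1) (underCat x) (Dc ⦋n⦌)).inv ≫ (HU x ▷ Dc ⦋n⦌)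

/-- `Htld` corestricted to the subobject. -/
noncomputable def rS (x : F 0 ⟶ X) (n : ℕ) :
    (F 1) ⊗ bSub x n ⟶ bSub x n where
  app q := TypeCat.ofHom fun z => ⟨(Htld x n).app q (z.1, z.2.1), by
    rcases z.2.2 with hs | ⟨w, hw⟩
    · exact Or.inl hs
    · exact Or.inr ⟨w,
        ((napp (HUd x) q (z.1, w)).symm.trans
          (congrArg (fun u => (HU x).app q (z.1, u)) hw))⟩⟩
  naturality {q q'} φ := by
    refine ConcreteCategory.hom_ext _ _ fun z => ?_
    apply Subtype.ext
    exact tcongr ((((F 1) ◁ bIncl x n) ≫ Htld x n).naturality φ) z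

lemma rS_incl (x : F 0 ⟶ X) (n : ℕ) :
    rS x n ≫ bIncl x n = ((F 1) ◁ bIncl x n) ≫ Htld x n := rfl

lemma q0_incl (x : F 0 ⟶ X) (n : ℕ) :
    q0 x n ≫ bIncl x n = m0 x n := rfl

lemma C1 (x : F 0 ⟶ X) (n : ℕ) :
    (e01 ▷ (TB x n)) ≫ Htld x n = m0 x n := by
  have h1 : (e01 ▷ (TB x n)) ≫ Htld x n =
      CartesianMonoidalCategory.lift
        (CartesianMonoidalCategory.lift (CartesianMonoidalCategory.fst (F 0) (TB x n))
          (CartesianMonoidalCategory.snd (F 0) (TB x n) ≫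
            CartesianMonoidalCategory.fst (underCat x) (Dc ⦋n⦌)) ≫ ((e01 ▷ underCat x) ≫ HU x))
        (CartesianMonoidalCategory.snd (F 0) (TB x n) ≫
          CartesianMonoidalCategory.snd (underCat x) (Dc ⦋n⦌)) := rfl
  rw [h1, HUa]
  apply CartesianMonoidalCategory.hom_ext
  · simp [m0]
  · simp [m0]

lemma C2 (x : F 0 ⟶ X) (n : ℕ) :
    vin e1F (TB x n) ≫ Htld x n = 𝟙 (TB x n) := by
  have h1 : vin e1F (TB x n) ≫ Htld x n =
      CartesianMonoidalCategory.lift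
        (CartesianMonoidalCategory.lift
          (FZeroIsTerminal.from (TB x n) ≫ e1F)
          (CartesianMonoidalCategory.fst (underCat x) (Dc ⦋n⦌)) ≫ HU x)
        (CartesianMonoidalCategory.snd (underCat x) (Dc ⦋n⦌)) := rfl
  have h2 : CartesianMonoidalCategory.lift
      (FZeroIsTerminal.from (TB x n) ≫ e1F)
      (CartesianMonoidalCategory.fst (underCat x) (Dc ⦋n⦌)) =
      CartesianMonoidalCategory.fst (underCat x) (Dc ⦋n⦌) ≫ vin e1F (underCat x) := by
    apply CartesianMonoidalCategory.hom_ext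
    · simp only [vin, CartesianMonoidalCategory.lift_fst, Category.assoc,
        CartesianMonoidalCategory.lift_fst]
      rw [← Category.assoc]
      congr 1
    · simp [vin]
  rw [h1, h2, Category.assoc, HUb, Category.comp_id]
  apply CartesianMonoidalCategory.hom_ext
  · simp
  · simp

/-- Core extension lemma: a map on the subobject, compatible with the projection,
extends to all of `(x\X) ⊗ Δc[n]`. -/
lemma core (x : F 0 ⟶ X) (n : ℕ) {E : sSp} (π : E ⟶ X)
    (hπ : sTrivFib (expComparison' e01 π))
    (a : bSub x n ⟶ E)
    (ha : a ≫ π = bIncl x n ≫ CartesianMonoidalCategory.fst (underCat x) (Dc ⦋n⦌) ≫ underProj x) :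
    ∃ ℓ : TB x n ⟶ E,
      bIncl x n ≫ ℓ = a ∧
      ℓ ≫ π = CartesianMonoidalCategory.fst (underCat x) (Dc ⦋n⦌) ≫ underProj x := by
  have hcof : sCof (bIncl x n) := sCof_of_injective _ (bIncl_injective x n)
  have H1 : (rS x n ≫ a) ≫ π = ((F 1) ◁ bIncl x n) ≫
      (Htld x n ≫ CartesianMonoidalCategory.fst (underCat x) (Dc ⦋n⦌) ≫ underProj x) := by
    rw [Category.assoc, ha, ← Category.assoc, ← Category.assoc, rS_incl, Category.assoc,
      Category.assoc]
  have hm0fst : m0 x n ≫ CartesianMonoidalCategory.fst (underCat x) (Dc ⦋n⦌) ≫ underProj x =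
      CartesianMonoidalCategory.fst (F 0) (TB x n) ≫ x := by
    rw [← Category.assoc, m0, CartesianMonoidalCategory.lift_fst, Category.assoc, jp]
  have H2 : (q0 x n ≫ a) ≫ π = (e01 ▷ (TB x n)) ≫
      (Htld x n ≫ CartesianMonoidalCategory.fst (underCat x) (Dc ⦋n⦌) ≫ underProj x) := by
    have l1 : (q0 x n ≫ a) ≫ π = CartesianMonoidalCategory.fst (F 0) (TB x n) ≫ x := by
      rw [Category.assoc, ha, ← Category.assoc, q0_incl, hm0fst]
    have l2 : (e01 ▷ (TB x n)) ≫
        (Htld x n ≫ CartesianMonoidalCategory.fst (underCat x) (Dc ⦋n⦌) ≫ underProj x) =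
        CartesianMonoidalCategory.fst (F 0) (TB x n) ≫ x := by
      rw [← Category.assoc, C1, hm0fst]
    rw [l1, l2]
  have H3 : ((F 0) ◁ bIncl x n) ≫ (q0 x n ≫ a) = (e01 ▷ bSub x n) ≫ (rS x n ≫ a) := by
    rw [← Category.assoc, ← Category.assoc]
    congr 1
    apply bCancel
    rw [Category.assoc, Category.assoc, q0_incl, rS_incl, ← Category.assoc,
      ← whisker_exchange, Category.assoc, C1]
  obtain ⟨L, hL1, hL2, hL3⟩ := lift_along_e01 π hπ (bIncl x n) hcof
    (rS x n ≫ a) (q0 x n ≫ a)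
    (Htld x n ≫ CartesianMonoidalCategory.fst (underCat x) (Dc ⦋n⦌) ≫ underProj x) H1 H2 H3
  have hvr : vin e1F (bSub x n) ≫ rS x n = 𝟙 (bSub x n) := by
    apply bCancel
    rw [Category.assoc, rS_incl, ← Category.assoc, ← vin_natural, Category.assoc, C2,
      Category.comp_id, Category.id_comp]
  refine ⟨vin e1F _ ≫ L, ?_, ?_⟩
  · rw [← Category.assoc, vin_natural, Category.assoc, hL1, ← Category.assoc, hvr,
      Category.id_comp]
  · rw [Category.assoc, hL3, ← Category.assoc, C2, Category.id_comp]

end Core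
section Part1

open CartesianMonoidalCategory

/-- The canonical point of `(F 0).obj q`. -/
noncomputable def z0 (q : (SimplexCategory × SimplexCategory)ᵒᵖ) : (F 0).obj q :=
  SimplexCategory.const q.unop.1 ⦋0⦌ 0

variable {E X : sSp} (π : E ⟶ X) (x : F 0 ⟶ X) (n : ℕ)

variable (f : (∂Δ[n] : SSet) ⟶ MapOver X (underCat x) E (underProj x) π)
variable (g : (Δ[n] : SSet) ⟶ MapOver X (F 0) E (idEdge x ≫ underProj x) π)

/-- Value extracted from the top map of a lifting square. -/
noncomputable def topVal (q : (SimplexCategory × SimplexCategory)ᵒᵖ)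
    (s : q.unop.2 ⟶ (⦋n⦌ : SimplexCategory))
    (hs : ¬ Function.Surjective (SimplexCategory.Hom.toOrderHom s))
    (u : (underCat x).obj q) : E.obj q :=
  (f.app (Opposite.op q.unop.2) ⟨ULift.up s, hs⟩).1.app q ⟨u, 𝟙 q.unop.2⟩

/-- Value extracted from the bottom map of a lifting square. -/
noncomputable def botVal (q : (SimplexCategory × SimplexCategory)ᵒᵖ)
    (s : q.unop.2 ⟶ (⦋n⦌ : SimplexCategory)) : E.obj q :=
  (g.app (Opposite.op q.unop.2) (ULift.up s)).1.app q ⟨z0 q, 𝟙 q.unop.2⟩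

lemma topVal_natural {q q' : (SimplexCategory × SimplexCategory)ᵒᵖ} (φ : q ⟶ q')
    (s : q.unop.2 ⟶ (⦋n⦌ : SimplexCategory))
    (hs : ¬ Function.Surjective (SimplexCategory.Hom.toOrderHom s))
    (hs' : ¬ Function.Surjective (SimplexCategory.Hom.toOrderHom (φ.unop.2 ≫ s)))
    (u : (underCat x).obj q) :
    topVal π x n f q' (φ.unop.2 ≫ s) hs' ((underCat x).map φ u) =
      E.map φ (topVal π x n f q s hs u) := by
  have h1 := tcongr (f.naturality (Quiver.Hom.op φ.unop.2)) ⟨ULift.up s, hs⟩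
  have h2 : topVal π x n f q' (φ.unop.2 ≫ s) hs' ((underCat x).map φ u) =
      ((underCat x ◁ DcHom φ.unop.2) ≫
        (f.app (Opposite.op q.unop.2) ⟨ULift.up s, hs⟩).1).app q'
        ⟨(underCat x).map φ u, 𝟙 q'.unop.2⟩ :=
    tcongr (congrArg (fun t => (Subtype.val t).app q') h1)
      ⟨(underCat x).map φ u, 𝟙 q'.unop.2⟩
  exact h2.trans
    (tcongr ((f.app (Opposite.op q.unop.2) ⟨ULift.up s, hs⟩).1.naturality φ)
      ⟨u, 𝟙 q.unop.2⟩)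

lemma botVal_natural {q q' : (SimplexCategory × SimplexCategory)ᵒᵖ} (φ : q ⟶ q')
    (s : q.unop.2 ⟶ (⦋n⦌ : SimplexCategory)) :
    botVal π x n g q' (φ.unop.2 ≫ s) = E.map φ (botVal π x n g q s) := by
  have h1 := tcongr (g.naturality (Quiver.Hom.op φ.unop.2)) (ULift.up s)
  have h2 : botVal π x n g q' (φ.unop.2 ≫ s) =
      (((F 0) ◁ DcHom φ.unop.2) ≫
        (g.app (Opposite.op q.unop.2) (ULift.up s)).1).app q'
        ⟨z0 q', 𝟙 q'.unop.2⟩ :=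
    tcongr (congrArg (fun t => (Subtype.val t).app q') h1) ⟨z0 q', 𝟙 q'.unop.2⟩
  have h3 : (g.app (Opposite.op q.unop.2) (ULift.up s)).1.app q'
      ⟨z0 q', 𝟙 q'.unop.2 ≫ φ.unop.2⟩ =
      (g.app (Opposite.op q.unop.2) (ULift.up s)).1.app q'
      ⟨(F 0).map φ (z0 q), 𝟙 q'.unop.2 ≫ φ.unop.2⟩ :=
    congrArg (fun w : (F 0).obj q' =>
      (g.app (Opposite.op q.unop.2) (ULift.up s)).1.app q' ⟨w, 𝟙 q'.unop.2 ≫ φ.unop.2⟩)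
      (Subsingleton.elim (z0 q') ((F 0).map φ (z0 q)))
  exact (h2.trans h3).trans
    (tcongr ((g.app (Opposite.op q.unop.2) (ULift.up s)).1.naturality φ)
      ⟨z0 q, 𝟙 q.unop.2⟩)

/-- Compatibility: top and bottom values agree on the identity edge. -/
lemma top_bot_compat
    (w : f ≫ MapOverPrecomp (underProj x) π (idEdge x) = ∂Δ[n].ι ≫ g)
    (q : (SimplexCategory × SimplexCategory)ᵒᵖ)
    (s : q.unop.2 ⟶ (⦋n⦌ : SimplexCategory))
    (hs : ¬ Function.Surjective (SimplexCategory.Hom.toOrderHom s))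
    (z : (F 0).obj q) :
    topVal π x n f q s hs ((idEdge x).app q z) = botVal π x n g q s := by
  have h1 := tcongr (congrArg (fun nt => NatTrans.app nt (Opposite.op q.unop.2)) w)
    ⟨ULift.up s, hs⟩
  have h2 : topVal π x n f q s hs ((idEdge x).app q z) =
      (g.app (Opposite.op q.unop.2) (ULift.up s)).1.app q ⟨z, 𝟙 q.unop.2⟩ :=
    tcongr (congrArg (fun t => (Subtype.val t).app q) h1) ⟨z, 𝟙 q.unop.2⟩
  rw [h2, botVal]
  exact congrArg (fun w' : (F 0).obj q =>
    (g.app (Opposite.op q.unop.2) (ULift.up s)).1.app q ⟨w', 𝟙 q.unop.2⟩)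
    (Subsingleton.elim z (z0 q))

open scoped Classical in
/-- The glued function on the subobject `bSub`. -/
noncomputable def aFun
    (w : f ≫ MapOverPrecomp (underProj x) π (idEdge x) = ∂Δ[n].ι ≫ g)
    (q : (SimplexCategory × SimplexCategory)ᵒᵖ) (y : (bSub x n).obj q) : E.obj q :=
  if hs : Function.Surjective (SimplexCategory.Hom.toOrderHom y.1.2) then
    botVal π x n g q y.1.2
  else topVal π x n f q y.1.2 hs y.1.1

lemma aFun_top
    (w : f ≫ MapOverPrecomp (underProj x) π (idEdge x) = ∂Δ[n].ι ≫ g)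
    (q : (SimplexCategory × SimplexCategory)ᵒᵖ) (y : (bSub x n).obj q)
    (hs : ¬ Function.Surjective (SimplexCategory.Hom.toOrderHom y.1.2)) :
    aFun π x n f g w q y = topVal π x n f q y.1.2 hs y.1.1 := dif_neg hs

lemma aFun_bot
    (w : f ≫ MapOverPrecomp (underProj x) π (idEdge x) = ∂Δ[n].ι ≫ g)
    (q : (SimplexCategory × SimplexCategory)ᵒᵖ) (y : (bSub x n).obj q)
    (hz : ∃ z : (F 0).obj q, (idEdge x).app q z = y.1.1) :
    aFun π x n f g w q y = botVal π x n g q y.1.2 := by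
  by_cases hs : Function.Surjective (SimplexCategory.Hom.toOrderHom y.1.2)
  · exact dif_pos hs
  · rw [aFun_top π x n f g w q y hs]
    obtain ⟨z, hz0⟩ := hz
    rw [← hz0]
    exact top_bot_compat π x n f g w q y.1.2 hs z

/-- The glued map on the subobject `bSub`. -/
noncomputable def aMap
    (w : f ≫ MapOverPrecomp (underProj x) π (idEdge x) = ∂Δ[n].ι ≫ g) :
    bSub x n ⟶ E where
  app q := TypeCat.ofHom (aFun π x n f g w q)
  naturality {q q'} φ := by
    refine ConcreteCategory.hom_ext _ _ fun y => ?_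
    show aFun π x n f g w q' ((bSub x n).map φ y) = E.map φ (aFun π x n f g w q y)
    by_cases hs' : Function.Surjective
        (SimplexCategory.Hom.toOrderHom (((bSub x n).map φ y).1.2))
    · have hsy : Function.Surjective (SimplexCategory.Hom.toOrderHom y.1.2) :=
        Function.Surjective.of_comp hs'
      rcases y.2 with hns | ⟨z, hz0⟩
      · exact absurd hsy hns
      · rw [aFun_bot π x n f g w q' ((bSub x n).map φ y)
            ⟨(F 0).map φ z, (tcongr ((idEdge x).naturality φ) z).trans
              (congrArg ((underCat x).map φ) hz0)⟩,
          aFun_bot π x n f g w q y ⟨z, hz0⟩]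
        exact botVal_natural π x n g φ y.1.2
    · rw [aFun_top π x n f g w q' ((bSub x n).map φ y) hs']
      by_cases hsy : Function.Surjective (SimplexCategory.Hom.toOrderHom y.1.2)
      · rcases y.2 with hns | ⟨z, hz0⟩
        · exact absurd hsy hns
        · rw [aFun_bot π x n f g w q y ⟨z, hz0⟩]
          show topVal π x n f q' (φ.unop.2 ≫ y.1.2) hs' ((underCat x).map φ y.1.1) =
            E.map φ (botVal π x n g q y.1.2)
          rw [← botVal_natural π x n g φ y.1.2]
          have hu : (underCat x).map φ y.1.1 = (idEdge x).app q' ((F 0).map φ z) :=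
            ((tcongr ((idEdge x).naturality φ) z).trans
              (congrArg ((underCat x).map φ) hz0)).symm
          rw [hu]
          exact top_bot_compat π x n f g w q' (φ.unop.2 ≫ y.1.2) hs' ((F 0).map φ z)
      · rw [aFun_top π x n f g w q y hsy]
        show topVal π x n f q' (φ.unop.2 ≫ y.1.2) hs' ((underCat x).map φ y.1.1) =
          E.map φ (topVal π x n f q y.1.2 hsy y.1.1)
        exact topVal_natural π x n f φ y.1.2 hsy hs' y.1.1

lemma aMap_pi
    (w : f ≫ MapOverPrecomp (underProj x) π (idEdge x) = ∂Δ[n].ι ≫ g) :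
    aMap π x n f g w ≫ π =
      bIncl x n ≫ CartesianMonoidalCategory.fst (underCat x) (Dc ⦋n⦌) ≫ underProj x := by
  apply NatTrans.ext
  funext q
  ext y
  show π.app q (aFun π x n f g w q y) = (underProj x).app q y.1.1
  by_cases hs : Function.Surjective (SimplexCategory.Hom.toOrderHom y.1.2)
  · rcases y.2 with hns | ⟨z, hz0⟩
    · exact absurd hs hns
    · rw [aFun_bot π x n f g w q y ⟨z, hz0⟩]
      refine (napp (g.app (Opposite.op q.unop.2) (ULift.up y.1.2)).2 q
        ⟨z0 q, 𝟙 q.unop.2⟩).trans ?_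
      show (underProj x).app q ((idEdge x).app q (z0 q)) = _
      rw [show (idEdge x).app q (z0 q) = y.1.1 from
        (congrArg ((idEdge x).app q) (Subsingleton.elim (z0 q) z)).trans hz0]
  · rw [aFun_top π x n f g w q y hs]
    exact napp (f.app (Opposite.op q.unop.2) ⟨ULift.up y.1.2, hs⟩).2 q ⟨y.1.1, 𝟙 q.unop.2⟩

lemma topVal_translate (mo : SimplexCategoryᵒᵖ) (α : (∂Δ[n] : SSet).obj mo)
    (q : (SimplexCategory × SimplexCategory)ᵒᵖ) (t : q.unop.2 ⟶ mo.unop)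
    (u : (underCat x).obj q)
    (hns : ¬ Function.Surjective (SimplexCategory.Hom.toOrderHom (t ≫ α.1.down))) :
    topVal π x n f q (t ≫ α.1.down) hns u = (f.app mo α).1.app q ⟨u, t⟩ := by
  have h1 := tcongr (f.naturality (Quiver.Hom.op t)) α
  have h1' : f.app (Opposite.op q.unop.2) ((∂Δ[n] : SSet).map (Quiver.Hom.op t) α) =
      (MapOver X (underCat x) E (underProj x) π).map (Quiver.Hom.op t) (f.app mo α) := h1
  have h2 : topVal π x n f q (t ≫ α.1.down) hns u =
      ((underCat x ◁ DcHom t) ≫ (f.app mo α).1).app q ⟨u, 𝟙 q.unop.2⟩ :=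
    tcongr (congrArg (fun w => (Subtype.val w).app q) h1') ⟨u, 𝟙 q.unop.2⟩
  have h3 : ((underCat x ◁ DcHom t) ≫ (f.app mo α).1).app q ⟨u, 𝟙 q.unop.2⟩ =
      (f.app mo α).1.app q ⟨u, t⟩ := by
    show (f.app mo α).1.app q ⟨u, 𝟙 q.unop.2 ≫ t⟩ = _
    rw [Category.id_comp]
  exact h2.trans h3

lemma botVal_translate (mo : SimplexCategoryᵒᵖ) (α : (Δ[n] : SSet).obj mo)
    (q : (SimplexCategory × SimplexCategory)ᵒᵖ) (t : q.unop.2 ⟶ mo.unop)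
    (z : (F 0).obj q) :
    botVal π x n g q (t ≫ α.down) = (g.app mo α).1.app q ⟨z, t⟩ := by
  have h1 := tcongr (g.naturality (Quiver.Hom.op t)) α
  have h1' : g.app (Opposite.op q.unop.2) ((Δ[n] : SSet).map (Quiver.Hom.op t) α) =
      (MapOver X (F 0) E (idEdge x ≫ underProj x) π).map (Quiver.Hom.op t) (g.app mo α) := h1
  have h2 : botVal π x n g q (t ≫ α.down) =
      (((F 0) ◁ DcHom t) ≫ (g.app mo α).1).app q ⟨z0 q, 𝟙 q.unop.2⟩ :=
    tcongr (congrArg (fun w => (Subtype.val w).app q) h1') ⟨z0 q, 𝟙 q.unop.2⟩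
  have h3 : (((F 0) ◁ DcHom t) ≫ (g.app mo α).1).app q ⟨z0 q, 𝟙 q.unop.2⟩ =
      (g.app mo α).1.app q ⟨z0 q, t⟩ := by
    show (g.app mo α).1.app q ⟨z0 q, 𝟙 q.unop.2 ≫ t⟩ = _
    rw [Category.id_comp]
  exact (h2.trans h3).trans (congrArg (fun w : (F 0).obj q => (g.app mo α).1.app q ⟨w, t⟩)
    (Subsingleton.elim (z0 q) z))

/-- The candidate lift as a map of simplicial sets. -/
noncomputable def liftSS (ℓ : TB x n ⟶ E)
    (hπℓ : ℓ ≫ π = CartesianMonoidalCategory.fst (underCat x) (Dc ⦋n⦌) ≫ underProj x) :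
    (Δ[n] : SSet) ⟶ MapOver X (underCat x) E (underProj x) π where
  app mo := TypeCat.ofHom fun α => ⟨(underCat x ◁ DcHom α.down) ≫ ℓ, by
    rw [Category.assoc, hπℓ, ← Category.assoc]
    rw [show (underCat x ◁ DcHom α.down) ≫ CartesianMonoidalCategory.fst (underCat x) (Dc ⦋n⦌) =
      CartesianMonoidalCategory.fst (underCat x) (Dc mo.unop) from
      CartesianMonoidalCategory.whiskerLeft_fst _ _]⟩
  naturality {mo mo'} ψ := by
    refine ConcreteCategory.hom_ext _ _ fun α => ?_
    apply Subtype.ext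
    show (underCat x ◁ DcHom (ψ.unop ≫ α.down)) ≫ ℓ = _
    rw [DcHom_comp, MonoidalCategory.whiskerLeft_comp, Category.assoc]
    rfl

lemma fac_left_part
    (w : f ≫ MapOverPrecomp (underProj x) π (idEdge x) = ∂Δ[n].ι ≫ g)
    (ℓ : TB x n ⟶ E)
    (hπℓ : ℓ ≫ π = CartesianMonoidalCategory.fst (underCat x) (Dc ⦋n⦌) ≫ underProj x)
    (hι : bIncl x n ≫ ℓ = aMap π x n f g w) :
    ∂Δ[n].ι ≫ liftSS π x n ℓ hπℓ = f := by
  apply NatTrans.ext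
  funext mo
  ext α
  apply Subtype.ext
  apply NatTrans.ext
  funext q
  ext y
  show ℓ.app q ⟨y.1, y.2 ≫ α.1.down⟩ = (f.app mo α).1.app q y
  have hns : ¬ Function.Surjective (SimplexCategory.Hom.toOrderHom (y.2 ≫ α.1.down)) :=
    fun hsurj => α.2 (Function.Surjective.of_comp hsurj)
  have h1 : ℓ.app q ⟨y.1, y.2 ≫ α.1.down⟩ =
      aFun π x n f g w q ⟨⟨y.1, y.2 ≫ α.1.down⟩, Or.inl hns⟩ :=
    tcongr (congrArg (fun nt => NatTrans.app nt q) hι)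
      ⟨⟨y.1, y.2 ≫ α.1.down⟩, Or.inl hns⟩
  rw [h1, aFun_top π x n f g w q ⟨⟨y.1, y.2 ≫ α.1.down⟩, Or.inl hns⟩ hns]
  exact topVal_translate π x n f mo α q y.2 y.1 hns

lemma fac_right_part
    (w : f ≫ MapOverPrecomp (underProj x) π (idEdge x) = ∂Δ[n].ι ≫ g)
    (ℓ : TB x n ⟶ E)
    (hπℓ : ℓ ≫ π = CartesianMonoidalCategory.fst (underCat x) (Dc ⦋n⦌) ≫ underProj x)
    (hι : bIncl x n ≫ ℓ = aMap π x n f g w) :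
    liftSS π x n ℓ hπℓ ≫ MapOverPrecomp (underProj x) π (idEdge x) = g := by
  apply NatTrans.ext
  funext mo
  ext α
  apply Subtype.ext
  apply NatTrans.ext
  funext q
  ext y
  show ℓ.app q ⟨(idEdge x).app q y.1, y.2 ≫ α.down⟩ = (g.app mo α).1.app q y
  have h1 : ℓ.app q ⟨(idEdge x).app q y.1, y.2 ≫ α.down⟩ =
      aFun π x n f g w q ⟨⟨(idEdge x).app q y.1, y.2 ≫ α.down⟩, Or.inr ⟨y.1, rfl⟩⟩ :=
    tcongr (congrArg (fun nt => NatTrans.app nt q) hι)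
      ⟨⟨(idEdge x).app q y.1, y.2 ≫ α.down⟩, Or.inr ⟨y.1, rfl⟩⟩
  rw [h1, aFun_bot π x n f g w q
    ⟨⟨(idEdge x).app q y.1, y.2 ≫ α.down⟩, Or.inr ⟨y.1, rfl⟩⟩ ⟨y.1, rfl⟩]
  exact botVal_translate π x n g mo α q y.2 y.1

/-- Statement 17, first half: the evaluation at the identity edge is a trivial
fibration of simplicial sets. -/
lemma part1 {E X : sSp} (π : E ⟶ X) (x : F 0 ⟶ X)
    (hπ : sTrivFib (expComparison' e01 π)) :
    TrivFib (MapOverPrecomp (underProj x) π (idEdge x)) := by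
  intro n
  constructor
  intro f g sq
  obtain ⟨ℓ, hι, hπℓ⟩ := core x n π hπ (aMap π x n f g sq.w) (aMap_pi π x n f g sq.w)
  exact ⟨⟨⟨liftSS π x n ℓ hπℓ, fac_left_part π x n f g sq.w ℓ hπℓ hι,
    fac_right_part π x n f g sq.w ℓ hπℓ hι⟩⟩⟩

end Part1
section Part2

open CartesianMonoidalCategory

lemma nonsurj_const {m : SimplexCategory} (α : m ⟶ (⦋1⦌ : SimplexCategory))
    (h : ¬ Function.Surjective (SimplexCategory.Hom.toOrderHom α))
    (i j : Fin (m.len + 1)) :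
    α.toOrderHom i = α.toOrderHom j := by
  by_contra hne
  apply h
  intro v
  by_cases hv : v = α.toOrderHom i
  · exact ⟨i, hv.symm⟩
  · refine ⟨j, ?_⟩
    have h1 : ((α.toOrderHom i : Fin 2) : ℕ) < 2 := (α.toOrderHom i).isLt
    have h2 : ((α.toOrderHom j : Fin 2) : ℕ) < 2 := (α.toOrderHom j).isLt
    have h3 : ((v : Fin 2) : ℕ) < 2 := v.isLt
    have h4 : ((v : Fin 2) : ℕ) ≠ ((α.toOrderHom i : Fin 2) : ℕ) :=
      fun hh => hv (Fin.ext hh)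
    have h5 : ((α.toOrderHom i : Fin 2) : ℕ) ≠ ((α.toOrderHom j : Fin 2) : ℕ) :=
      fun hh => hne (Fin.ext hh)
    exact (Fin.ext (by omega) : α.toOrderHom j = v)

lemma comp_const0 {m b : SimplexCategory} (α1 : m ⟶ (⦋1⦌ : SimplexCategory))
    (hα : ¬ Function.Surjective (SimplexCategory.Hom.toOrderHom α1))
    (hc : α1.toOrderHom 0 = 0) (t : b ⟶ m) (c : b ⟶ (⦋0⦌ : SimplexCategory)) :
    t ≫ α1 = c ≫ SimplexCategory.δ 1 := by
  apply SimplexCategory.Hom.ext'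
  apply OrderHom.ext
  funext i
  show α1.toOrderHom (t.toOrderHom i) =
    (SimplexCategory.δ (1 : Fin 2)).toOrderHom (c.toOrderHom i)
  rw [delta1_val, nonsurj_const α1 hα (t.toOrderHom i) 0, hc]

lemma comp_const1 {m b : SimplexCategory} (α1 : m ⟶ (⦋1⦌ : SimplexCategory))
    (hα : ¬ Function.Surjective (SimplexCategory.Hom.toOrderHom α1))
    (hc : α1.toOrderHom 0 = 1) (t : b ⟶ m) (c : b ⟶ (⦋0⦌ : SimplexCategory)) :
    t ≫ α1 = c ≫ SimplexCategory.δ 0 := by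
  apply SimplexCategory.Hom.ext'
  apply OrderHom.ext
  funext i
  show α1.toOrderHom (t.toOrderHom i) =
    (SimplexCategory.δ (0 : Fin 2)).toOrderHom (c.toOrderHom i)
  rw [delta0_val, nonsurj_const α1 hα (t.toOrderHom i) 0, hc]

variable {E X : sSp} (π : E ⟶ X) (x : F 0 ⟶ X)

/-- The top map of the lifting square in the homotopy argument. -/
noncomputable def topB (f g : underCat x ⟶ E)
    (hf : f ≫ π = underProj x) (hg : g ≫ π = underProj x) :
    (∂Δ[1] : SSet) ⟶ MapOver X (underCat x) E (underProj x) π where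
  app mo := TypeCat.ofHom fun α =>
    if SimplexCategory.Hom.toOrderHom α.1.down 0 = 0 then
      ⟨CartesianMonoidalCategory.fst (underCat x) (Dc mo.unop) ≫ f, by
        rw [Category.assoc, hf]⟩
    else
      ⟨CartesianMonoidalCategory.fst (underCat x) (Dc mo.unop) ≫ g, by
        rw [Category.assoc, hg]⟩
  naturality {mo mo'} ψ := by
    refine ConcreteCategory.hom_ext _ _ fun α => ?_
    have hcon : SimplexCategory.Hom.toOrderHom
        (((∂Δ[1] : SSet).map ψ α).1).down 0 =
        SimplexCategory.Hom.toOrderHom α.1.down 0 :=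
      nonsurj_const α.1.down α.2 ((SimplexCategory.Hom.toOrderHom ψ.unop) 0) 0
    show (if SimplexCategory.Hom.toOrderHom (((∂Δ[1] : SSet).map ψ α).1).down 0 = 0
        then ⟨CartesianMonoidalCategory.fst (underCat x) (Dc mo'.unop) ≫ f, _⟩
        else ⟨CartesianMonoidalCategory.fst (underCat x) (Dc mo'.unop) ≫ g, _⟩) =
      (MapOver X (underCat x) E (underProj x) π).map ψ
        (if SimplexCategory.Hom.toOrderHom α.1.down 0 = 0
        then ⟨CartesianMonoidalCategory.fst (underCat x) (Dc mo.unop) ≫ f, _⟩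
        else ⟨CartesianMonoidalCategory.fst (underCat x) (Dc mo.unop) ≫ g, _⟩)
    by_cases hc : SimplexCategory.Hom.toOrderHom α.1.down 0 = 0
    · erw [if_pos (hcon.trans hc), if_pos hc]
      apply Subtype.ext
      show CartesianMonoidalCategory.fst _ _ ≫ f =
        (underCat x ◁ DcHom ψ.unop) ≫ CartesianMonoidalCategory.fst _ _ ≫ f
      rw [← Category.assoc, CartesianMonoidalCategory.whiskerLeft_fst]
    · erw [if_neg (fun hh => hc (hcon.symm.trans hh)), if_neg hc]
      apply Subtype.ext
      show CartesianMonoidalCategory.fst _ _ ≫ g =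
        (underCat x ◁ DcHom ψ.unop) ≫ CartesianMonoidalCategory.fst _ _ ≫ g
      rw [← Category.assoc, CartesianMonoidalCategory.whiskerLeft_fst]

/-- The bottom map of the lifting square in the homotopy argument. -/
noncomputable def botB (h : (F 0) ⊗ D 1 ⟶ E)
    (hπh : h ≫ π = CartesianMonoidalCategory.fst (F 0) (D 1) ≫ (idEdge x ≫ underProj x)) :
    (Δ[1] : SSet) ⟶ MapOver X (F 0) E (idEdge x ≫ underProj x) π where
  app mo := TypeCat.ofHom fun α => ⟨((F 0) ◁ DcHom α.down) ≫ h, by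
    erw [Category.assoc, hπh, ← Category.assoc]⟩
  naturality {mo mo'} ψ := by
    refine ConcreteCategory.hom_ext _ _ fun α => ?_
    apply Subtype.ext
    show ((F 0) ◁ DcHom (ψ.unop ≫ α.down)) ≫ h = _
    erw [DcHom_comp, MonoidalCategory.whiskerLeft_comp, Category.assoc]
    rfl

end Part2
section Part2b

open CartesianMonoidalCategory

variable {E X : sSp} (π : E ⟶ X) (x : F 0 ⟶ X)

lemma topB_pos (f g : underCat x ⟶ E) (hf : f ≫ π = underProj x)
    (hg : g ≫ π = underProj x) (mo : SimplexCategoryᵒᵖ) (α : (∂Δ[1] : SSet).obj mo)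
    (hc : SimplexCategory.Hom.toOrderHom α.1.down 0 = 0) :
    (topB π x f g hf hg).app mo α =
      ⟨CartesianMonoidalCategory.fst (underCat x) (Dc mo.unop) ≫ f, by
        rw [Category.assoc, hf]⟩ := by
  show (if SimplexCategory.Hom.toOrderHom α.1.down 0 = 0
      then (⟨CartesianMonoidalCategory.fst (underCat x) (Dc mo.unop) ≫ f, _⟩ :
        (MapOver X (underCat x) E (underProj x) π).obj mo)
      else ⟨CartesianMonoidalCategory.fst (underCat x) (Dc mo.unop) ≫ g, _⟩) =
    ⟨CartesianMonoidalCategory.fst (underCat x) (Dc mo.unop) ≫ f, _⟩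
  rw [if_pos hc]

lemma topB_neg (f g : underCat x ⟶ E) (hf : f ≫ π = underProj x)
    (hg : g ≫ π = underProj x) (mo : SimplexCategoryᵒᵖ) (α : (∂Δ[1] : SSet).obj mo)
    (hc : ¬ SimplexCategory.Hom.toOrderHom α.1.down 0 = 0) :
    (topB π x f g hf hg).app mo α =
      ⟨CartesianMonoidalCategory.fst (underCat x) (Dc mo.unop) ≫ g, by
        rw [Category.assoc, hg]⟩ := by
  show (if SimplexCategory.Hom.toOrderHom α.1.down 0 = 0
      then (⟨CartesianMonoidalCategory.fst (underCat x) (Dc mo.unop) ≫ f, _⟩ :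
        (MapOver X (underCat x) E (underProj x) π).obj mo)
      else ⟨CartesianMonoidalCategory.fst (underCat x) (Dc mo.unop) ≫ g, _⟩) =
    ⟨CartesianMonoidalCategory.fst (underCat x) (Dc mo.unop) ≫ g, _⟩
  rw [if_neg hc]

lemma sqW (f g : underCat x ⟶ E) (hf : f ≫ π = underProj x)
    (hg : g ≫ π = underProj x) (h : (F 0) ⊗ D 1 ⟶ E)
    (hπh : h ≫ π = CartesianMonoidalCategory.fst (F 0) (D 1) ≫ (idEdge x ≫ underProj x))
    (h0 : cylIncl 0 (F 0) ≫ h = idEdge x ≫ f)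
    (h1 : cylIncl 1 (F 0) ≫ h = idEdge x ≫ g) :
    topB π x f g hf hg ≫ MapOverPrecomp (underProj x) π (idEdge x) =
      ∂Δ[1].ι ≫ botB π x h hπh := by
  apply NatTrans.ext
  funext mo
  ext α
  show (MapOverPrecomp (underProj x) π (idEdge x)).app mo
    ((topB π x f g hf hg).app mo α) = (botB π x h hπh).app mo α.1
  have e1 : (idEdge x ▷ Dc mo.unop) ≫ CartesianMonoidalCategory.fst (underCat x) (Dc mo.unop) =
      CartesianMonoidalCategory.fst (F 0) (Dc mo.unop) ≫ idEdge x :=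
    CartesianMonoidalCategory.whiskerRight_fst _ _
  by_cases hc : SimplexCategory.Hom.toOrderHom α.1.down 0 = 0
  · rw [topB_pos π x f g hf hg mo α hc]
    apply Subtype.ext
    show (idEdge x ▷ Dc mo.unop) ≫ CartesianMonoidalCategory.fst (underCat x) (Dc mo.unop) ≫ f =
      ((F 0) ◁ DcHom α.1.down) ≫ h
    have e2 : ((F 0) ◁ DcHom α.1.down) =
        CartesianMonoidalCategory.fst (F 0) (Dc mo.unop) ≫ cylIncl 0 (F 0) := by
      apply CartesianMonoidalCategory.hom_ext
      · erw [Category.assoc,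
          show cylIncl 0 (F 0) ≫ CartesianMonoidalCategory.fst (F 0) (Dc ⦋1⦌) = 𝟙 (F 0) from
            CartesianMonoidalCategory.lift_fst _ _,
          Category.comp_id, CartesianMonoidalCategory.whiskerLeft_fst]
      · apply NatTrans.ext
        funext q
        ext y
        show y.2 ≫ α.1.down =
          (DZeroIsTerminal.from (F 0)).app q y.1 ≫ SimplexCategory.δ (Fin.rev 0)
        rw [show (Fin.rev (0 : Fin 2)) = 1 from by decide]
        exact comp_const0 α.1.down α.2 hc y.2 _
    erw [e2, ← Category.assoc, e1, Category.assoc, Category.assoc, h0]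
  · rw [topB_neg π x f g hf hg mo α hc]
    apply Subtype.ext
    show (idEdge x ▷ Dc mo.unop) ≫ CartesianMonoidalCategory.fst (underCat x) (Dc mo.unop) ≫ g =
      ((F 0) ◁ DcHom α.1.down) ≫ h
    have hc1 : SimplexCategory.Hom.toOrderHom α.1.down 0 = 1 := by
      have hlt : ((SimplexCategory.Hom.toOrderHom α.1.down 0 : Fin 2) : ℕ) < 2 :=
        (SimplexCategory.Hom.toOrderHom α.1.down 0).isLt
      have hne : ((SimplexCategory.Hom.toOrderHom α.1.down 0 : Fin 2) : ℕ) ≠ 0 :=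
        fun hh => hc (Fin.ext hh)
      have hone : ((1 : Fin (SimplexCategory.len ⦋1⦌ + 1)) : ℕ) = 1 := rfl
      exact Fin.ext (by omega)
    have e2 : ((F 0) ◁ DcHom α.1.down) =
        CartesianMonoidalCategory.fst (F 0) (Dc mo.unop) ≫ cylIncl 1 (F 0) := by
      apply CartesianMonoidalCategory.hom_ext
      · erw [Category.assoc,
          show cylIncl 1 (F 0) ≫ CartesianMonoidalCategory.fst (F 0) (Dc ⦋1⦌) = 𝟙 (F 0) from
            CartesianMonoidalCategory.lift_fst _ _,
          Category.comp_id, CartesianMonoidalCategory.whiskerLeft_fst]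
      · apply NatTrans.ext
        funext q
        ext y
        show y.2 ≫ α.1.down =
          (DZeroIsTerminal.from (F 0)).app q y.1 ≫ SimplexCategory.δ (Fin.rev 1)
        rw [show (Fin.rev (1 : Fin 2)) = 0 from by decide]
        exact comp_const1 α.1.down α.2 hc1 y.2 _
    erw [e2, ← Category.assoc, e1, Category.assoc, Category.assoc, h1]

lemma face_eval (ℓSS : (Δ[1] : SSet) ⟶ MapOver X (underCat x) E (underProj x) π)
    (d : (⦋0⦌ : SimplexCategory) ⟶ ⦋1⦌) :
    (underCat x ◁ DcHom d) ≫
        (ℓSS.app (Opposite.op (⦋1⦌ : SimplexCategory))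
          (ULift.up (𝟙 (⦋1⦌ : SimplexCategory)))).1 =
      (ℓSS.app (Opposite.op (⦋0⦌ : SimplexCategory)) (ULift.up d)).1 := by
  have h1' : ℓSS.app (Opposite.op (⦋0⦌ : SimplexCategory))
      (ULift.up (d ≫ 𝟙 (⦋1⦌ : SimplexCategory))) =
      (MapOver X (underCat x) E (underProj x) π).map (Quiver.Hom.op d)
        (ℓSS.app (Opposite.op (⦋1⦌ : SimplexCategory))
          (ULift.up (𝟙 (⦋1⦌ : SimplexCategory)))) :=
    tcongr (ℓSS.naturality (Quiver.Hom.op d)) (ULift.up (𝟙 (⦋1⦌ : SimplexCategory)))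
  rw [Category.comp_id] at h1'
  exact (congrArg Subtype.val h1').symm

lemma cyl_factor (i : Fin 2) (d : (⦋0⦌ : SimplexCategory) ⟶ ⦋1⦌)
    (hd : SimplexCategory.δ (Fin.rev i) = d) :
    cylIncl i (underCat x) =
      CartesianMonoidalCategory.lift (𝟙 (underCat x)) (DZeroIsTerminal.from (underCat x)) ≫
        (underCat x ◁ DcHom d) := by
  apply CartesianMonoidalCategory.hom_ext
  · erw [show cylIncl i (underCat x) ≫ CartesianMonoidalCategory.fst (underCat x) (D 1) =
        𝟙 (underCat x) from CartesianMonoidalCategory.lift_fst _ _]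
  · apply NatTrans.ext
    funext q
    ext u
    show (DZeroIsTerminal.from (underCat x)).app q u ≫ SimplexCategory.δ (Fin.rev i) =
      (DZeroIsTerminal.from (underCat x)).app q u ≫ d
    rw [hd]

/-- Statement 17, second half. -/
lemma part2 {E X : sSp} (π : E ⟶ X) (x : F 0 ⟶ X)
    (hπ2 : sTrivFib (expComparison' e01 π))
    (f g : underCat x ⟶ E) (hf : f ≫ π = underProj x) (hg : g ≫ π = underProj x)
    (h : (F 0) ⊗ D 1 ⟶ E)
    (hπh : h ≫ π = CartesianMonoidalCategory.fst (F 0) (D 1) ≫ (idEdge x ≫ underProj x))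
    (h0 : cylIncl 0 (F 0) ≫ h = idEdge x ≫ f)
    (h1 : cylIncl 1 (F 0) ≫ h = idEdge x ≫ g) :
    HtpyOver (underProj x) π ⟨f, hf⟩ ⟨g, hg⟩ := by
  haveI : HasLiftingProperty (∂Δ[1].ι)
      (MapOverPrecomp (underProj x) π (idEdge x)) := part1 π x hπ2 1
  have sq : CommSq (topB π x f g hf hg) (∂Δ[1].ι)
      (MapOverPrecomp (underProj x) π (idEdge x)) (botB π x h hπh) :=
    ⟨sqW π x f g hf hg h hπh h0 h1⟩
  have ns0 : ¬ Function.Surjective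
      (SimplexCategory.Hom.toOrderHom (SimplexCategory.δ (1 : Fin 2))) := by
    intro hs
    obtain ⟨i, hi⟩ := hs 1
    rw [delta1_val i] at hi
    exact (by decide : ¬ ((0 : Fin 2) = 1)) hi
  have ns1 : ¬ Function.Surjective
      (SimplexCategory.Hom.toOrderHom (SimplexCategory.δ (0 : Fin 2))) := by
    intro hs
    obtain ⟨i, hi⟩ := hs 0
    rw [delta0_val i] at hi
    exact (by decide : ¬ ((1 : Fin 2) = 0)) hi
  refine ⟨(sq.lift.app (Opposite.op (⦋1⦌ : SimplexCategory))
      (ULift.up (𝟙 (⦋1⦌ : SimplexCategory)))).1,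
    (sq.lift.app (Opposite.op (⦋1⦌ : SimplexCategory))
      (ULift.up (𝟙 (⦋1⦌ : SimplexCategory)))).2, ?_, ?_⟩
  · have hface := face_eval π x sq.lift (SimplexCategory.δ 1)
    have hb : sq.lift.app (Opposite.op (⦋0⦌ : SimplexCategory))
        (ULift.up (SimplexCategory.δ 1)) =
        (topB π x f g hf hg).app (Opposite.op (⦋0⦌ : SimplexCategory))
          (⟨ULift.up (SimplexCategory.δ 1), ns0⟩ :
            (∂Δ[1] : SSet).obj (Opposite.op (⦋0⦌ : SimplexCategory))) :=
      tcongr (congrArg (fun nt => NatTrans.app nt (Opposite.op (⦋0⦌ : SimplexCategory)))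
        sq.fac_left) ⟨ULift.up (SimplexCategory.δ 1), ns0⟩
    rw [topB_pos π x f g hf hg (Opposite.op (⦋0⦌ : SimplexCategory))
      ⟨ULift.up (SimplexCategory.δ 1), ns0⟩ (delta1_val 0)] at hb
    have hval : (underCat x ◁ DcHom (SimplexCategory.δ 1)) ≫
        (sq.lift.app (Opposite.op (⦋1⦌ : SimplexCategory))
          (ULift.up (𝟙 (⦋1⦌ : SimplexCategory)))).1 =
        CartesianMonoidalCategory.fst (underCat x) (Dc ⦋0⦌) ≫ f :=
      hface.trans (congrArg Subtype.val hb)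
    rw [cyl_factor x 0 (SimplexCategory.δ 1)
        (by rw [show (Fin.rev (0 : Fin 2)) = 1 from by decide])]
    exact (Category.assoc _ _ _).trans
      ((congrArg (CartesianMonoidalCategory.lift (𝟙 (underCat x))
        (DZeroIsTerminal.from (underCat x)) ≫ ·) hval).trans
        ((Category.assoc _ _ _).symm.trans
          ((congrArg (· ≫ f) (CartesianMonoidalCategory.lift_fst _ _)).trans
            (Category.id_comp _))))
  · have hface := face_eval π x sq.lift (SimplexCategory.δ 0)
    have hb : sq.lift.app (Opposite.op (⦋0⦌ : SimplexCategory))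
        (ULift.up (SimplexCategory.δ 0)) =
        (topB π x f g hf hg).app (Opposite.op (⦋0⦌ : SimplexCategory))
          (⟨ULift.up (SimplexCategory.δ 0), ns1⟩ :
            (∂Δ[1] : SSet).obj (Opposite.op (⦋0⦌ : SimplexCategory))) :=
      tcongr (congrArg (fun nt => NatTrans.app nt (Opposite.op (⦋0⦌ : SimplexCategory)))
        sq.fac_left) ⟨ULift.up (SimplexCategory.δ 0), ns1⟩
    rw [topB_neg π x f g hf hg (Opposite.op (⦋0⦌ : SimplexCategory))
      ⟨ULift.up (SimplexCategory.δ 0), ns1⟩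
      (by rw [delta0_val 0]; decide)] at hb
    have hval : (underCat x ◁ DcHom (SimplexCategory.δ 0)) ≫
        (sq.lift.app (Opposite.op (⦋1⦌ : SimplexCategory))
          (ULift.up (𝟙 (⦋1⦌ : SimplexCategory)))).1 =
        CartesianMonoidalCategory.fst (underCat x) (Dc ⦋0⦌) ≫ g :=
      hface.trans (congrArg Subtype.val hb)
    rw [cyl_factor x 1 (SimplexCategory.δ 0)
        (by rw [show (Fin.rev (1 : Fin 2)) = 0 from by decide])]
    exact (Category.assoc _ _ _).trans
      ((congrArg (CartesianMonoidalCategory.lift (𝟙 (underCat x))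
        (DZeroIsTerminal.from (underCat x)) ≫ ·) hval).trans
        ((Category.assoc _ _ _).symm.trans
          ((congrArg (· ≫ g) (CartesianMonoidalCategory.lift_fst _ _)).trans
            (Category.id_comp _))))

end Part2b

theorem evaluation_at_id_trivFib (E X : sSp) (π : E ⟶ X) (hπ : LeftFib π)
    (x : F 0 ⟶ X) :
    TrivFib (MapOverPrecomp (underProj x) π (idEdge x)) ∧
    (∀ (f g : underCat x ⟶ E) (hf : f ≫ π = underProj x)
        (hg : g ≫ π = underProj x),
      HtpyOver (idEdge x ≫ underProj x) π
        ⟨idEdge x ≫ f, by rw [Category.assoc, hf]⟩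
        ⟨idEdge x ≫ g, by rw [Category.assoc, hg]⟩ →
      HtpyOver (underProj x) π ⟨f, hf⟩ ⟨g, hg⟩) := by
  refine ⟨part1 π x hπ.2, ?_⟩
  intro f g hf hg hyp
  obtain ⟨h, hπh, h0, h1⟩ := hyp
  exact part2 π x hπ.2 f g hf hg h hπh h0 h1

end KQ
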